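/- Let X be a δ-hyperbolic geodesic space and let p : [a,b] → X be an (8δ+1)-local geodesic. Then the image of p is contained in the 2δ-neighborhood of any geodesic segment joining p(a) and p(b), and conversely any such geodesic segment is contained in the 3δ-neighborhood of the image of p. -/

import Mathlib

/-- `s` is (the image of) a geodesic segment from `x` to `y`. -/
def IsGeodesicSegment {Y : Type*} [MetricSpace Y] (s : Set Y) (x y : Y) : Prop :=
  ∃ γ : ℝ → Y, γ 0 = x ∧ γ (dist x y) = y ∧ s = γ '' Set.Icc 0 (dist x y) ∧
    ∀ u ∈ Set.Icc 0 (dist x y), ∀ v ∈ Set.Icc 0 (dist x y), dist (γ u) (γ v) = |u - v|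

/-- Every point of `A` is within distance `c` of some point of `B`. -/
def InNbhd {Y : Type*} [MetricSpace Y] (A B : Set Y) (c : ℝ) : Prop :=
  ∀ p ∈ A, ∃ q ∈ B, dist p q ≤ c

/-- Every point of `A` is within distance strictly less than `c` of some point of `B`. -/
def InNbhdLt {Y : Type*} [MetricSpace Y] (A B : Set Y) (c : ℝ) : Prop :=
  ∀ p ∈ A, ∃ q ∈ B, dist p q < c

/-- `Y` is a geodesic space: any two points are joined by a geodesic segment. -/
def IsGeodesicSpace (Y : Type*) [MetricSpace Y] : Prop :=
  ∀ x y : Y, ∃ s : Set Y, IsGeodesicSegment s x y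

/-- `Y` is `δ`-hyperbolic: every geodesic triangle is `δ`-slim. -/
def SlimTriangles (Y : Type*) [MetricSpace Y] (δ : ℝ) : Prop :=
  ∀ (x y z : Y) (s₁ s₂ s₃ : Set Y),
    IsGeodesicSegment s₁ x y → IsGeodesicSegment s₂ y z → IsGeodesicSegment s₃ x z →
      InNbhd s₁ (s₂ ∪ s₃) δ ∧ InNbhd s₂ (s₁ ∪ s₃) δ ∧ InNbhd s₃ (s₁ ∪ s₂) δ
/-- `p` restricted to `[a,b]` (parametrized by arclength) is a `k`-local geodesic. -/
def IsLocalGeodesicOn {Y : Type*} [MetricSpace Y] (k : ℝ) (p : ℝ → Y) (a b : ℝ) : Prop :=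
  ∀ s t : ℝ, a ≤ s → s ≤ t → t ≤ b → t - s ≤ k → dist (p s) (p t) = t - s


open Set Metric

lemma seg_point_dist {Y : Type*} [MetricSpace Y] {S : Set Y} {x y : Y}
    (h : IsGeodesicSegment S x y) {w : Y} (hw : w ∈ S) :
    dist x w + dist w y = dist x y := by
  obtain ⟨γ, h0, hL, hS, hiso⟩ := h
  rw [hS] at hw
  obtain ⟨u, hu, rfl⟩ := hw
  have h1 : dist x (γ u) = u := by
    rw [← h0, hiso 0 ⟨le_rfl, dist_nonneg⟩ u hu, abs_sub_comm, abs_of_nonneg (by simpa using hu.1)]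
    simp
  have h2 : dist (γ u) y = dist x y - u := by
    conv_lhs => rw [← hL]
    rw [hiso u hu _ ⟨dist_nonneg, le_rfl⟩, abs_of_nonpos (by linarith [hu.2])]
    ring
  rw [h1, h2]; ring

lemma seg_symm {Y : Type*} [MetricSpace Y] {S : Set Y} {x y : Y}
    (h : IsGeodesicSegment S x y) : IsGeodesicSegment S y x := by
  obtain ⟨γ, h0, hL, hS, hiso⟩ := h
  have hd : dist y x = dist x y := dist_comm y x
  refine ⟨fun u => γ (dist x y - u), by simp [hd, hL], by simp [hd, h0], ?_, ?_⟩
  · rw [hd, hS]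
    have himg : (fun u => dist x y - u) '' Icc 0 (dist x y) = Icc 0 (dist x y) := by
      rw [Set.image_const_sub_Icc]; simp
    calc γ '' Icc 0 (dist x y) = γ '' ((fun u => dist x y - u) '' Icc 0 (dist x y)) := by
          rw [himg]
      _ = (fun u => γ (dist x y - u)) '' Icc 0 (dist x y) := Set.image_image _ _ _
  · intro u hu v hv
    rw [hd] at hu hv
    rw [hiso _ ⟨by linarith [hu.2], by linarith [hu.1]⟩ _ ⟨by linarith [hv.2], by linarith [hv.1]⟩]
    rw [abs_sub_comm]
    congr 1; ring

lemma isGeodesicSegment_of_iso {Y : Type*} [MetricSpace Y] (f : ℝ → Y) {c d : ℝ} (hcd : c ≤ d)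
    (hiso : ∀ u ∈ Icc c d, ∀ v ∈ Icc c d, dist (f u) (f v) = |u - v|) :
    IsGeodesicSegment (f '' Icc c d) (f c) (f d) := by
  have hdist : dist (f c) (f d) = d - c := by
    rw [hiso c ⟨le_rfl, hcd⟩ d ⟨hcd, le_rfl⟩, abs_of_nonpos (by linarith)]; ring
  refine ⟨fun u => f (c + u), by simp, by rw [hdist]; norm_num, ?_, ?_⟩
  · rw [hdist]
    have himg : (fun u => c + u) '' Icc 0 (d - c) = Icc c d := by
      rw [Set.image_const_add_Icc]; norm_num
    calc f '' Icc c d = f '' ((fun u => c + u) '' Icc 0 (d - c)) := by rw [himg]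
      _ = (fun u => f (c + u)) '' Icc 0 (d - c) := Set.image_image _ _ _
  · intro u hu v hv
    rw [hdist] at hu hv
    rw [hiso _ ⟨by linarith [hu.1], by linarith [hu.2]⟩ _ ⟨by linarith [hv.1], by linarith [hv.2]⟩]
    congr 1; ring

lemma contOn_of_localIso {Y : Type*} [MetricSpace Y] (f : ℝ → Y) (c d k : ℝ) (hk : 0 < k)
    (h : ∀ u ∈ Icc c d, ∀ v ∈ Icc c d, |u - v| ≤ k → dist (f u) (f v) = |u - v|) :
    ContinuousOn f (Icc c d) := by
  rw [Metric.continuousOn_iff]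
  intro t ht ε hε
  refine ⟨min ε k, lt_min hε hk, fun t' ht' hd => ?_⟩
  rw [Real.dist_eq] at hd
  rw [h t' ht' t ht (le_of_lt (lt_of_lt_of_le hd (min_le_right _ _)))]
  exact lt_of_lt_of_le hd (min_le_left _ _)

theorem local_geodesic_close_to_geodesic {Y : Type*} [MetricSpace Y] (δ : ℝ) (hδ : 0 ≤ δ)
    (hgeo : IsGeodesicSpace Y) (hhyp : SlimTriangles Y δ)
    (p : ℝ → Y) (a b : ℝ) (hab : a ≤ b)
    (hp : IsLocalGeodesicOn (8 * δ + 1) p a b)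
    (s : Set Y) (hs : IsGeodesicSegment s (p a) (p b)) :
    InNbhd (p '' Set.Icc a b) s (2 * δ) ∧ InNbhd s (p '' Set.Icc a b) (3 * δ) := by
  obtain ⟨γ, hγ0, hγL, hsEq, hγiso⟩ := hs
  set L := dist (p a) (p b) with hLdef
  have hL0 : 0 ≤ L := dist_nonneg
  have hγcont : ContinuousOn γ (Icc 0 L) :=
    contOn_of_localIso γ 0 L (L + 1) (by linarith) (fun u hu v hv _ => hγiso u hu v hv)
  have hscomp : IsCompact s := by
    rw [hsEq]; exact isCompact_Icc.image_of_continuousOn hγcont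
  have hsne : s.Nonempty := ⟨γ 0, by rw [hsEq]; exact mem_image_of_mem _ (left_mem_Icc.2 hL0)⟩
  have hpa : p a ∈ s := by rw [← hγ0, hsEq]; exact mem_image_of_mem _ (left_mem_Icc.2 hL0)
  have hpb : p b ∈ s := by rw [← hγL, hsEq]; exact mem_image_of_mem _ (right_mem_Icc.2 hL0)
  have hpdist : ∀ u ∈ Icc a b, ∀ v ∈ Icc a b, |u - v| ≤ 8*δ+1 → dist (p u) (p v) = |u - v| := by
    intro u hu v hv hk
    rcases le_total u v with h | h
    · rw [abs_sub_comm u v, abs_of_nonneg (by linarith)] at hk ⊢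
      exact hp u v hu.1 h hv.2 hk
    · rw [abs_of_nonneg (by linarith)] at hk ⊢
      rw [dist_comm]
      exact hp v u hv.1 h hu.2 hk
  have hpcont : ContinuousOn p (Icc a b) := contOn_of_localIso p a b _ (by linarith) hpdist
  -- Part 1
  have part1 : InNbhd (p '' Icc a b) s (2*δ) := by
    have hfc : ContinuousOn (fun t => infDist (p t) s) (Icc a b) :=
      (Metric.continuous_infDist_pt s).comp_continuousOn hpcont
    obtain ⟨T, hTmem, hTmax⟩ := isCompact_Icc.exists_isMaxOn (nonempty_Icc.2 hab) hfc
    obtain ⟨D, hDdef⟩ : ∃ D : ℝ, D = infDist (p T) s := ⟨_, rfl⟩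
    have hD0 : 0 ≤ D := hDdef ▸ infDist_nonneg
    have hTmax' : ∀ t ∈ Icc a b, infDist (p t) s ≤ D := fun t ht => hDdef ▸ hTmax ht
    suffices hD : D ≤ 2*δ by
      rintro x ⟨t, ht, rfl⟩
      obtain ⟨q, hq, hq'⟩ := hscomp.exists_infDist_eq_dist hsne (p t)
      exact ⟨q, hq, by rw [← hq']; exact le_trans (hTmax' t ht) hD⟩
    obtain ⟨m, hmdef⟩ : ∃ m : ℝ, m = 4*δ + 1/2 := ⟨_, rfl⟩
    obtain ⟨t₁, ht₁def⟩ : ∃ t₁ : ℝ, t₁ = max a (T - m) := ⟨_, rfl⟩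
    obtain ⟨t₂, ht₂def⟩ : ∃ t₂ : ℝ, t₂ = min b (T + m) := ⟨_, rfl⟩
    have ha1 : a ≤ t₁ := ht₁def ▸ le_max_left _ _
    have h1T : t₁ ≤ T := ht₁def ▸ max_le hTmem.1 (by linarith)
    have hT2 : T ≤ t₂ := ht₂def ▸ le_min hTmem.2 (by linarith)
    have h2b : t₂ ≤ b := ht₂def ▸ min_le_left _ _
    have h1m : T - t₁ ≤ m := by have := ht₁def ▸ le_max_right a (T - m); linarith
    have h2m : t₂ - T ≤ m := by have := ht₂def ▸ min_le_right b (T + m); linarith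
    have hxT1 : dist (p t₁) (p T) = T - t₁ := hp _ _ ha1 h1T hTmem.2 (by linarith)
    have hxT2 : dist (p T) (p t₂) = t₂ - T := hp _ _ hTmem.1 hT2 h2b (by linarith)
    have hS0 : IsGeodesicSegment (p '' Icc t₁ t₂) (p t₁) (p t₂) := by
      refine isGeodesicSegment_of_iso p (le_trans h1T hT2) ?_
      intro u hu v hv
      refine hpdist u ⟨le_trans ha1 hu.1, le_trans hu.2 h2b⟩
        v ⟨le_trans ha1 hv.1, le_trans hv.2 h2b⟩ ?_
      rw [abs_le]
      constructor
      · linarith [hu.1, hv.2]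
      · linarith [hu.2, hv.1]
    have hxmem : p T ∈ p '' Icc t₁ t₂ := mem_image_of_mem _ ⟨h1T, hT2⟩
    obtain ⟨y', hy's, hy'D, hy'0⟩ :
        ∃ y' ∈ s, dist (p t₁) y' ≤ D ∧ (T - t₁ < m → dist (p t₁) y' = 0) := by
      rcases le_or_gt a (T - m) with h | h
      · obtain ⟨q, hq, hq'⟩ := hscomp.exists_infDist_eq_dist hsne (p t₁)
        refine ⟨q, hq, ?_, ?_⟩
        · rw [← hq']; exact hTmax' t₁ ⟨ha1, le_trans h1T hTmem.2⟩
        · intro hlt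
          exfalso
          have ht₁ : t₁ = T - m := by rw [ht₁def]; exact max_eq_right h
          rw [ht₁] at hlt; linarith
      · have ht₁ : t₁ = a := by rw [ht₁def]; exact max_eq_left (by linarith)
        exact ⟨p a, hpa, by rw [ht₁, dist_self]; exact hD0, fun _ => by rw [ht₁, dist_self]⟩
    obtain ⟨z', hz's, hz'D, hz'0⟩ :
        ∃ z' ∈ s, dist (p t₂) z' ≤ D ∧ (t₂ - T < m → dist (p t₂) z' = 0) := by
      rcases le_or_gt (T + m) b with h | h
      · obtain ⟨q, hq, hq'⟩ := hscomp.exists_infDist_eq_dist hsne (p t₂)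
        refine ⟨q, hq, ?_, ?_⟩
        · rw [← hq']; exact hTmax' t₂ ⟨le_trans hTmem.1 hT2, h2b⟩
        · intro hlt
          exfalso
          have ht₂ : t₂ = T + m := by rw [ht₂def]; exact min_eq_right h
          rw [ht₂] at hlt; linarith
      · have ht₂ : t₂ = b := by rw [ht₂def]; exact min_eq_left (by linarith)
        exact ⟨p b, hpb, by rw [ht₂, dist_self]; exact hD0, fun _ => by rw [ht₂, dist_self]⟩
    obtain ⟨S₁, hS₁⟩ := hgeo (p t₁) y'
    obtain ⟨S₂, hS₂⟩ := hgeo (p t₂) z'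
    obtain ⟨Sd, hSd⟩ := hgeo (p t₁) z'
    obtain ⟨w, hw, hxw⟩ := (hhyp (p t₁) (p t₂) z' _ _ _ hS0 hS₂ hSd).1 (p T) hxmem
    have hDle : ∀ q' ∈ s, D ≤ dist (p T) q' := fun q' hq' => hDdef ▸ infDist_le_dist_of_mem hq'
    rcases hw with hw2 | hwd
    · -- w on the geodesic from p t₂ to z'
      have hsum := seg_point_dist hS₂ hw2
      have htriangle := dist_triangle (p T) w (p t₂)
      rw [dist_comm w (p t₂)] at htriangle
      have hDz : D ≤ dist (p T) z' := hDle z' hz's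
      have h1 : dist (p T) z' ≤ dist (p T) w + dist w z' := dist_triangle _ _ _
      rcases lt_or_ge (t₂ - T) m with hc | hc
      · have h0 := hz'0 hc
        have hwz : dist w z' ≤ 0 := by
          rw [h0] at hsum; linarith [dist_nonneg (x := p t₂) (y := w)]
        linarith
      · have hceq : t₂ - T = m := le_antisymm h2m hc
        linarith
    · -- w on the diagonal from p t₁ to z'
      obtain ⟨u₁, hu₁, hy'γ⟩ : ∃ u ∈ Icc 0 L, γ u = y' := by rw [hsEq] at hy's; exact hy's
      obtain ⟨u₂, hu₂, hz'γ⟩ : ∃ u ∈ Icc 0 L, γ u = z' := by rw [hsEq] at hz's; exact hz's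
      obtain ⟨Sm, hSm, hSmsub⟩ : ∃ Sm, IsGeodesicSegment Sm z' y' ∧ Sm ⊆ s := by
        rcases le_total u₂ u₁ with h | h
        · refine ⟨γ '' Icc u₂ u₁, ?_, ?_⟩
          · rw [← hy'γ, ← hz'γ]
            exact isGeodesicSegment_of_iso γ h (fun u hu v hv =>
              hγiso u ⟨le_trans hu₂.1 hu.1, le_trans hu.2 hu₁.2⟩
                v ⟨le_trans hu₂.1 hv.1, le_trans hv.2 hu₁.2⟩)
          · rw [hsEq]; exact image_mono (Icc_subset_Icc hu₂.1 hu₁.2)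
        · refine ⟨γ '' Icc u₁ u₂, ?_, ?_⟩
          · rw [← hy'γ, ← hz'γ]
            exact seg_symm (isGeodesicSegment_of_iso γ h (fun u hu v hv =>
              hγiso u ⟨le_trans hu₁.1 hu.1, le_trans hu.2 hu₂.2⟩
                v ⟨le_trans hu₁.1 hv.1, le_trans hv.2 hu₂.2⟩))
          · rw [hsEq]; exact image_mono (Icc_subset_Icc hu₁.1 hu₂.2)
      obtain ⟨w', hw', hww'⟩ := (hhyp (p t₁) z' y' _ _ _ hSd hSm hS₁).1 w hwd
      have hxw' : dist (p T) w' ≤ 2*δ := le_trans (dist_triangle _ w _) (by linarith)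
      rcases hw' with hwm | hw1
      · exact le_trans (hDle w' (hSmsub hwm)) hxw'
      · have hsum := seg_point_dist hS₁ hw1
        have hDy : D ≤ dist (p T) y' := hDle y' hy's
        have h1 : dist (p T) y' ≤ dist (p T) w' + dist w' y' := dist_triangle _ _ _
        have htr := dist_triangle (p t₁) w' (p T)
        rw [dist_comm w' (p T)] at htr
        rcases lt_or_ge (T - t₁) m with hc | hc
        · have h0 := hy'0 hc
          have hwz : dist w' y' ≤ 0 := by
            rw [h0] at hsum; linarith [dist_nonneg (x := p t₁) (y := w')]
          linarith
        · have hceq : T - t₁ = m := le_antisymm h1m hc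
          linarith
  refine ⟨part1, ?_⟩
  -- Part 2
  intro q' hq'
  rw [hsEq] at hq'
  obtain ⟨u₀, hu₀, rfl⟩ := hq'
  set P : ℝ → Y := fun t => p ((projIcc a b hab t : Icc a b) : ℝ) with hPdef
  have hPcont : Continuous P :=
    hpcont.comp_continuous (continuous_subtype_val.comp continuous_projIcc)
      (fun t => (projIcc a b hab t).2)
  have hPeq : ∀ t ∈ Icc a b, P t = p t := by
    intro t ht
    rw [hPdef]
    simp [projIcc_of_mem hab ht]
  set K₁ := γ '' Icc 0 u₀ with hK₁def
  set K₂ := γ '' Icc u₀ L with hK₂def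
  have hK₁c : IsCompact K₁ :=
    isCompact_Icc.image_of_continuousOn (hγcont.mono (Icc_subset_Icc le_rfl hu₀.2))
  have hK₂c : IsCompact K₂ :=
    isCompact_Icc.image_of_continuousOn (hγcont.mono (Icc_subset_Icc hu₀.1 le_rfl))
  have hK₁ne : K₁.Nonempty := ⟨γ 0, mem_image_of_mem _ (left_mem_Icc.2 hu₀.1)⟩
  have hK₂ne : K₂.Nonempty := ⟨γ u₀, mem_image_of_mem _ (left_mem_Icc.2 hu₀.2)⟩
  have hT₁closed : IsClosed {t : ℝ | infDist (P t) K₁ ≤ 2*δ} :=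
    isClosed_le ((continuous_infDist_pt K₁).comp hPcont) continuous_const
  have hT₂closed : IsClosed {t : ℝ | infDist (P t) K₂ ≤ 2*δ} :=
    isClosed_le ((continuous_infDist_pt K₂).comp hPcont) continuous_const
  have hcover : Icc a b ⊆ {t | infDist (P t) K₁ ≤ 2*δ} ∪ {t | infDist (P t) K₂ ≤ 2*δ} := by
    intro t ht
    obtain ⟨q, hq, hdq⟩ := part1 (p t) (mem_image_of_mem _ ht)
    rw [hsEq] at hq
    obtain ⟨u, hu, rfl⟩ := hq
    rcases le_total u u₀ with h | h
    · left
      have hmem : γ u ∈ K₁ := mem_image_of_mem _ ⟨hu.1, h⟩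
      show infDist (P t) K₁ ≤ 2*δ
      rw [hPeq t ht]
      exact le_trans (infDist_le_dist_of_mem hmem) hdq
    · right
      have hmem : γ u ∈ K₂ := mem_image_of_mem _ ⟨h, hu.2⟩
      show infDist (P t) K₂ ≤ 2*δ
      rw [hPeq t ht]
      exact le_trans (infDist_le_dist_of_mem hmem) hdq
  have hne1 : (Icc a b ∩ {t | infDist (P t) K₁ ≤ 2*δ}).Nonempty := by
    refine ⟨a, left_mem_Icc.2 hab, ?_⟩
    show infDist (P a) K₁ ≤ 2*δ
    rw [hPeq a (left_mem_Icc.2 hab)]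
    have hmem : p a ∈ K₁ := by rw [← hγ0]; exact mem_image_of_mem _ (left_mem_Icc.2 hu₀.1)
    have := infDist_le_dist_of_mem (x := p a) hmem
    rw [dist_self] at this
    linarith
  have hne2 : (Icc a b ∩ {t | infDist (P t) K₂ ≤ 2*δ}).Nonempty := by
    refine ⟨b, right_mem_Icc.2 hab, ?_⟩
    show infDist (P b) K₂ ≤ 2*δ
    rw [hPeq b (right_mem_Icc.2 hab)]
    have hmem : p b ∈ K₂ := by rw [← hγL]; exact mem_image_of_mem _ (right_mem_Icc.2 hu₀.2)
    have := infDist_le_dist_of_mem (x := p b) hmem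
    rw [dist_self] at this
    linarith
  obtain ⟨t₀, ht₀I, ht₀1, ht₀2⟩ :=
    isPreconnected_closed_iff.mp isPreconnected_Icc _ _ hT₁closed hT₂closed hcover hne1 hne2
  obtain ⟨y₁, hy₁K, hy₁d⟩ := hK₁c.exists_infDist_eq_dist hK₁ne (P t₀)
  obtain ⟨y₂, hy₂K, hy₂d⟩ := hK₂c.exists_infDist_eq_dist hK₂ne (P t₀)
  have hd1 : dist (p t₀) y₁ ≤ 2*δ := by
    rw [← hPeq t₀ ht₀I, ← hy₁d]; exact ht₀1
  have hd2 : dist (p t₀) y₂ ≤ 2*δ := by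
    rw [← hPeq t₀ ht₀I, ← hy₂d]; exact ht₀2
  obtain ⟨v₁, hv₁, rfl⟩ := hy₁K
  obtain ⟨v₂, hv₂, rfl⟩ := hy₂K
  have hv12 : v₁ ≤ v₂ := le_trans hv₁.2 hv₂.1
  have hSm2 : IsGeodesicSegment (γ '' Icc v₁ v₂) (γ v₁) (γ v₂) :=
    isGeodesicSegment_of_iso γ hv12 (fun u hu v hv =>
      hγiso u ⟨le_trans hv₁.1 hu.1, le_trans hu.2 hv₂.2⟩
        v ⟨le_trans hv₁.1 hv.1, le_trans hv.2 hv₂.2⟩)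
  obtain ⟨Sa, hSa⟩ := hgeo (γ v₂) (p t₀)
  obtain ⟨Sb, hSb⟩ := hgeo (γ v₁) (p t₀)
  obtain ⟨w, hw, hqw⟩ := (hhyp (γ v₁) (γ v₂) (p t₀) _ _ _ hSm2 hSa hSb).1 (γ u₀)
    (mem_image_of_mem _ ⟨hv₁.2, hv₂.1⟩)
  refine ⟨p t₀, mem_image_of_mem _ ht₀I, ?_⟩
  have htri := dist_triangle (γ u₀) w (p t₀)
  rcases hw with hwa | hwb
  · have hsum := seg_point_dist hSa hwa
    have hcm := dist_comm (γ v₂) (p t₀)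
    linarith [dist_nonneg (x := γ v₂) (y := w)]
  · have hsum := seg_point_dist hSb hwb
    have hcm := dist_comm (γ v₁) (p t₀)
    linarith [dist_nonneg (x := γ v₁) (y := w)]
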